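/- Forest similarity and tree edit distance are complementary: sim(F, F') = Σ_{v ∈ F} δ(v, ε) + Σ_{v' ∈ F'} δ(ε, v') - ed(F, F'), where ed is the tree edit distance with cost function δ and η(v,v') := δ(v,ε) + δ(ε,v') - δ(v,v'). -/

import Mathlib

namespace Stmt11

/-- A rooted ordered tree with labels in `α`. -/
inductive LTree (α : Type*) : Type _ where
  | node : α → List (LTree α) → LTree α

/-- An ordered forest. -/
abbrev LForest (α : Type*) := List (LTree α)

mutual
/-- Number of nodes of a tree. -/
def sizeT {α : Type*} : LTree α → ℕ
  | .node _ ts => 1 + sizeF ts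
/-- Number of nodes of a forest. -/
def sizeF {α : Type*} : LForest α → ℕ
  | [] => 0
  | t :: ts => sizeT t + sizeF ts
end

/-- The label of the node of `F` at address `p` (a path of child indices),
if it exists. -/
def labelAt {α : Type*} : LForest α → List ℕ → Option α
  | _, [] => none
  | ts, i :: p =>
    match ts[i]? with
    | none => none
    | some (.node a us) => if p = [] then some a else labelAt us p
termination_by _ p => p.length

/-- `p` is (the address of) a node of the forest `F`. -/
def IsNode {α : Type*} (F : LForest α) (p : List ℕ) : Prop := (labelAt F p).isSome

/-- Two matched pairs of node addresses are compatible: distinct nodes,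
ancestor (address-prefix) relations preserved in both directions, and for
incomparable nodes the pre-order (lexicographic) order is preserved. -/
def Compat (pp qq : List ℕ × List ℕ) : Prop :=
  pp.1 ≠ qq.1 ∧ pp.2 ≠ qq.2 ∧
  (pp.1 <+: qq.1 ↔ pp.2 <+: qq.2) ∧
  (qq.1 <+: pp.1 ↔ qq.2 <+: pp.2) ∧
  (List.Lex (· < ·) pp.1 qq.1 ↔ List.Lex (· < ·) pp.2 qq.2)

/-- A valid similarity mapping between the forests `F` and `F'`. -/
def IsMappingF {α : Type*} (F F' : LForest α) (M : List (List ℕ × List ℕ)) : Prop :=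
  (∀ pr ∈ M, IsNode F pr.1 ∧ IsNode F' pr.2) ∧ M.Pairwise Compat

/-- Total weight of a mapping under the weight function `η` on labels. -/
def wtF {α : Type*} [Inhabited α] (η : α → α → ℤ) (F F' : LForest α)
    (M : List (List ℕ × List ℕ)) : ℤ :=
  (M.map (fun pr =>
    η ((labelAt F pr.1).getD default) ((labelAt F' pr.2).getD default))).sum

/-- The set of achievable mapping weights; its greatest element is the forest
similarity `sim(F, F')`. -/
def simSetF {α : Type*} [Inhabited α] (η : α → α → ℤ) (F F' : LForest α) : Set ℤ :=
  {s | ∃ M, IsMappingF F F' M ∧ s = wtF η F F' M}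

theorem sizeF_append {α : Type*} (xs ys : LForest α) :
    sizeF (xs ++ ys) = sizeF xs + sizeF ys := by
  induction xs with
  | nil => simp [sizeF]
  | cons t ts ih => simp [sizeF, ih]; omega

/-- The tree edit distance between two ordered forests, defined by the
standard recurrence: delete the leftmost root (reattaching its children),
insert the leftmost root of the other forest, or match the two leftmost roots. -/
def fed {α : Type*} (δ : α → α → ℤ) (δdel δins : α → ℤ) : LForest α → LForest α → ℤ
  | [], [] => 0
  | .node a ts :: rest, [] => δdel a + fed δ δdel δins (ts ++ rest) []
  | [], .node b us :: rest' => δins b + fed δ δdel δins [] (us ++ rest')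
  | .node a ts :: rest, .node b us :: rest' =>
      min (δ a b + fed δ δdel δins ts us + fed δ δdel δins rest rest')
        (min (δdel a + fed δ δdel δins (ts ++ rest) (.node b us :: rest'))
             (δins b + fed δ δdel δins (.node a ts :: rest) (us ++ rest')))
termination_by F G => sizeF F + sizeF G
decreasing_by all_goals (simp [sizeF, sizeT, sizeF_append] <;> omega)

mutual
/-- Sum of a cost `c` over all node labels of a tree. -/
def sumCostT {α : Type*} (c : α → ℤ) : LTree α → ℤ
  | .node a ts => c a + sumCostF c ts
/-- Sum of a cost `c` over all node labels of a forest. -/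
def sumCostF {α : Type*} (c : α → ℤ) : LForest α → ℤ
  | [] => 0
  | t :: ts => sumCostT c t + sumCostF c ts
end


/-! ### Auxiliary material for the proof -/

section Aux

variable {α : Type*}

abbrev LLex (p q : List ℕ) : Prop := List.Lex (· < ·) p q

lemma lex_cons_iff {a b : ℕ} {l m : List ℕ} :
    LLex (a::l) (b::m) ↔ a < b ∨ (a = b ∧ LLex l m) := by
  constructor
  · intro h; cases h with
    | cons h => exact Or.inr ⟨rfl, h⟩
    | rel h => exact Or.inl h
  · rintro (h | ⟨rfl, h⟩)
    · exact List.Lex.rel h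
    · exact List.Lex.cons h

lemma llex_nil_iff {p : List ℕ} : LLex [] p ↔ p ≠ [] := by
  cases p with
  | nil => simp
  | cons a l => exact iff_of_true List.Lex.nil (by simp)

lemma lex_trichotomy (p q : List ℕ) : LLex p q ∨ p = q ∨ LLex q p :=
  trichotomous_of (List.Lex (· < ·)) p q

lemma lex_asymm {p q : List ℕ} (h : LLex p q) : ¬ LLex q p :=
  Std.Asymm.asymm p q h

lemma prefix_lex {p q : List ℕ} (h : p <+: q) (hne : p ≠ q) : LLex p q := by
  obtain ⟨r, rfl⟩ := h
  induction p with
  | nil => cases r with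
    | nil => simp at hne
    | cons a r => exact List.Lex.nil
  | cons a p ih => exact List.Lex.cons (ih (by simpa using hne))

lemma lex_append_of_lex {s t : List ℕ} (h : LLex s t) (hpre : ¬ s <+: t)
    (q q' : List ℕ) : LLex (s ++ q) (t ++ q') := by
  induction h with
  | nil => exact absurd (List.nil_prefix) hpre
  | @cons a l₁ l₂ h ih =>
    exact List.Lex.cons (ih (fun hp => hpre (List.cons_prefix_cons.2 ⟨rfl, hp⟩)))
  | rel h => exact List.Lex.rel h

lemma lex_append_left_iff (s q q' : List ℕ) :
    LLex (s ++ q) (s ++ q') ↔ LLex q q' := by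
  induction s with
  | nil => simp
  | cons a s ih => simpa [List.cons_lex_cons_iff, -List.lex_lt] using ih

/-- A prefix-free, lex-faithful "code". -/
def Code (c : ℕ → List ℕ) : Prop :=
  (∀ i, c i ≠ []) ∧ (∀ i j, c i <+: c j → i = j) ∧ (∀ i j, i < j ↔ LLex (c i) (c j))

lemma Code.eq_iff {c : ℕ → List ℕ} (hc : Code c) {i j : ℕ} {q q' : List ℕ} :
    c i ++ q = c j ++ q' ↔ i = j ∧ q = q' := by
  constructor
  · intro h
    have h1 : c i <+: c j ++ q' := h ▸ List.prefix_append _ _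
    have : i = j := by
      rcases List.prefix_or_prefix_of_prefix h1 (List.prefix_append _ _) with h2 | h2
      · exact hc.2.1 _ _ h2
      · exact (hc.2.1 _ _ h2).symm
    subst this
    exact ⟨rfl, List.append_cancel_left h⟩
  · rintro ⟨rfl, rfl⟩; rfl

lemma Code.prefix_iff {c : ℕ → List ℕ} (hc : Code c) {i j : ℕ} {q q' : List ℕ} :
    c i ++ q <+: c j ++ q' ↔ i = j ∧ q <+: q' := by
  constructor
  · intro h
    have h1 : c i <+: c j ++ q' := ((List.prefix_append _ _).trans h)
    have : i = j := by
      rcases List.prefix_or_prefix_of_prefix h1 (List.prefix_append _ _) with h2 | h2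
      · exact hc.2.1 _ _ h2
      · exact (hc.2.1 _ _ h2).symm
    subst this
    exact ⟨rfl, (List.prefix_append_right_inj _).1 h⟩
  · rintro ⟨rfl, h⟩
    exact (List.prefix_append_right_inj _).2 h

lemma Code.lex_iff {c : ℕ → List ℕ} (hc : Code c) {i j : ℕ} {q q' : List ℕ} :
    LLex (c i ++ q) (c j ++ q') ↔ i < j ∨ (i = j ∧ LLex q q') := by
  have key : ∀ i j (q q' : List ℕ), i < j → LLex (c i ++ q) (c j ++ q') := by
    intro i j q q' hij
    refine lex_append_of_lex ((hc.2.2 i j).1 hij) (fun hp => ?_) q q'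
    exact absurd (hc.2.1 _ _ hp) (by omega)
  constructor
  · intro h
    rcases lt_trichotomy i j with h1 | rfl | h1
    · exact Or.inl h1
    · exact Or.inr ⟨rfl, (lex_append_left_iff _ _ _).1 h⟩
    · exact absurd (key j i q' q h1) (lex_asymm h)
  · rintro (h | ⟨rfl, h⟩)
    · exact key _ _ _ _ h
    · exact (lex_append_left_iff _ _ _).2 h

/-- An order embedding on addresses relative to a domain predicate. -/
def Emb (f : List ℕ → List ℕ) (P : List ℕ → Prop) : Prop :=
  ∀ ⦃p q : List ℕ⦄, P p → P q →
    (f p = f q → p = q) ∧ (f p <+: f q ↔ p <+: q) ∧ (LLex (f p) (f q) ↔ LLex p q)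

lemma emb_code {c d : ℕ → List ℕ} (hc : Code c) (hd : Code d)
    {f : List ℕ → List ℕ} (hf : ∀ i q, f (c i ++ q) = d i ++ q) :
    Emb f (fun p => ∃ i q, p = c i ++ q) := by
  rintro p p' ⟨i, q, rfl⟩ ⟨j, q', rfl⟩
  rw [hf, hf]
  refine ⟨?_, ?_, ?_⟩
  · intro h
    obtain ⟨rfl, rfl⟩ := hd.eq_iff.1 h
    rfl
  · rw [hc.prefix_iff, hd.prefix_iff]
  · rw [hc.lex_iff, hd.lex_iff]

lemma emb_id (P : List ℕ → Prop) : Emb id P := by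
  intro p q _ _; exact ⟨fun h => h, Iff.rfl, Iff.rfl⟩

/-! #### Concrete codes -/

def cSing : ℕ → List ℕ := fun i => [i]
def cShift (k : ℕ) : ℕ → List ℕ := fun i => [i + k]
def cChild : ℕ → List ℕ := fun i => [0, i]
def cMix (n : ℕ) : ℕ → List ℕ := fun i => if i < n then [0, i] else [i - n + 1]

lemma code_cSing : Code cSing := by
  refine ⟨fun i => by simp [cSing], fun i j h => ?_, fun i j => ?_⟩
  · simpa [cSing, List.cons_prefix_cons] using h
  · simp [cSing]

lemma code_cShift (k : ℕ) : Code (cShift k) := by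
  refine ⟨fun i => by simp [cShift], fun i j h => ?_, fun i j => ?_⟩
  · simp [cShift, List.cons_prefix_cons] at h; omega
  · simp only [cShift, lex_cons_iff, llex_nil_iff, ne_eq, not_true_eq_false, and_false, or_false]; omega

lemma code_cChild : Code cChild := by
  refine ⟨fun i => by simp [cChild], fun i j h => ?_, fun i j => ?_⟩
  · simpa [cChild, List.cons_prefix_cons] using h
  · simp [cChild, lex_cons_iff, -List.lex_lt]

lemma code_cMix (n : ℕ) : Code (cMix n) := by
  refine ⟨fun i => by by_cases h : i < n <;> simp [cMix, h], fun i j h => ?_, fun i j => ?_⟩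
  · by_cases hi : i < n <;> by_cases hj : j < n <;>
      simp [cMix, hi, hj, List.cons_prefix_cons] at h <;> omega
  · by_cases hi : i < n <;> by_cases hj : j < n <;>
      simp [cMix, hi, hj, lex_cons_iff, -List.lex_lt] <;> omega

/-! #### Address re-mappings -/

def shiftHead (k : ℕ) : List ℕ → List ℕ
  | [] => []
  | i :: p => (i + k) :: p

def psiF (n : ℕ) : List ℕ → List ℕ
  | [] => []
  | i :: p => if i < n then 0 :: i :: p else (i - n + 1) :: p

def phiF (n : ℕ) : List ℕ → List ℕ
  | [] => []
  | 0 :: p => p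
  | (i+1) :: p => (i + n) :: p

def unshift : List ℕ → List ℕ
  | [] => []
  | i :: p => (i - 1) :: p

lemma emb_cons0 : Emb (fun p => 0 :: p) (fun p => ∃ i q, p = cSing i ++ q) :=
  emb_code code_cSing code_cChild (fun i q => rfl)

lemma emb_shift1 : Emb (shiftHead 1) (fun p => ∃ i q, p = cSing i ++ q) :=
  emb_code code_cSing (code_cShift 1) (fun i q => rfl)

lemma emb_psi (n : ℕ) : Emb (psiF n) (fun p => ∃ i q, p = cSing i ++ q) :=
  emb_code code_cSing (code_cMix n) (by
    intro i q
    by_cases h : i < n <;> simp [psiF, cMix, cSing, h])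

lemma emb_phi (n : ℕ) : Emb (phiF n) (fun p => ∃ i q, p = cMix n i ++ q) :=
  emb_code (code_cMix n) code_cSing (by
    intro i q
    by_cases h : i < n
    · simp [phiF, cMix, cSing, h]
    · have : cMix n i ++ q = (i - n + 1) :: q := by simp [cMix, h]
      rw [this]
      show (i - n + n) :: q = _
      simp [cSing]
      omega)

lemma emb_tail : Emb List.tail (fun p => ∃ i q, p = cChild i ++ q) :=
  emb_code code_cChild code_cSing (fun i q => rfl)

lemma emb_unshift : Emb unshift (fun p => ∃ i q, p = cShift 1 i ++ q) :=
  emb_code (code_cShift 1) code_cSing (by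
    intro i q
    show (i + 1 - 1) :: q = _
    simp [cSing])

/-! #### labelAt lemmas -/

@[simp] lemma labelAt_nil_addr (F : LForest α) : labelAt F [] = none := by
  simp [labelAt]

@[simp] lemma labelAt_nil_forest (p : List ℕ) : labelAt ([] : LForest α) p = none := by
  cases p <;> simp [labelAt]

lemma labelAt_cons (F : LForest α) (i : ℕ) (p : List ℕ) :
    labelAt F (i :: p) = match F[i]? with
      | none => none
      | some (.node a us) => if p = [] then some a else labelAt us p := by
  rw [labelAt]

@[simp] lemma labelAt_zero (a : α) (ts rest : LForest α) (p : List ℕ) :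
    labelAt (LTree.node a ts :: rest) (0 :: p) = if p = [] then some a else labelAt ts p := by
  rw [labelAt_cons]; simp

@[simp] lemma labelAt_succ (t : LTree α) (rest : LForest α) (i : ℕ) (p : List ℕ) :
    labelAt (t :: rest) ((i+1) :: p) = labelAt rest (i :: p) := by
  rw [labelAt_cons, labelAt_cons]; simp

lemma labelAt_append_lt (xs ys : LForest α) {i : ℕ} (h : i < xs.length) (p : List ℕ) :
    labelAt (xs ++ ys) (i :: p) = labelAt xs (i :: p) := by
  rw [labelAt_cons, labelAt_cons, List.getElem?_append, if_pos h]

lemma labelAt_append_ge (xs ys : LForest α) {i : ℕ} (h : xs.length ≤ i) (p : List ℕ) :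
    labelAt (xs ++ ys) (i :: p) = labelAt ys ((i - xs.length) :: p) := by
  rw [labelAt_cons, labelAt_cons, List.getElem?_append_right h]

lemma head_lt_of_labelAt {F : LForest α} {i : ℕ} {p : List ℕ}
    (h : (labelAt F (i :: p)).isSome) : i < F.length := by
  rw [labelAt_cons] at h
  by_contra hi
  rw [List.getElem?_eq_none (by omega)] at h
  simp at h

lemma IsNode.ne_nil {F : LForest α} {p : List ℕ} (h : IsNode F p) : p ≠ [] := by
  rintro rfl
  simp [IsNode] at h

lemma IsNode.shape {F : LForest α} {p : List ℕ} (h : IsNode F p) :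
    ∃ i q, p = cSing i ++ q := by
  obtain ⟨i, q, rfl⟩ := List.exists_cons_of_ne_nil h.ne_nil
  exact ⟨i, q, rfl⟩

/-- Classification of non-root nodes of a forest `node a ts :: rest`:
each such address has the form `cMix ts.length i ++ q`. -/
lemma classify {a : α} {ts rest : LForest α} {p : List ℕ}
    (h : IsNode (LTree.node a ts :: rest) p) (hne : p ≠ [0]) :
    ∃ i q, p = cMix ts.length i ++ q := by
  obtain ⟨i, q, rfl⟩ := List.exists_cons_of_ne_nil h.ne_nil
  match i, q with
  | 0, [] => exact absurd rfl hne
  | 0, (i' :: q') =>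
    have h2 : (labelAt ts (i' :: q')).isSome := by
      have := h
      unfold IsNode at this
      rwa [labelAt_zero, if_neg (by simp)] at this
    have h3 : i' < ts.length := head_lt_of_labelAt h2
    exact ⟨i', q', by simp [cMix, h3]⟩
  | (j+1), q =>
    refine ⟨j + ts.length, q, ?_⟩
    have hnl : ¬ (j + ts.length < ts.length) := by omega
    simp [cMix, hnl]

lemma nondesc_shape {p : List ℕ} (hnn : p ≠ []) (hpre : ¬ [0] <+: p) :
    ∃ i q, p = cShift 1 i ++ q := by
  obtain ⟨i, q, rfl⟩ := List.exists_cons_of_ne_nil hnn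
  match i with
  | 0 => exact absurd (List.cons_prefix_cons.2 ⟨rfl, List.nil_prefix⟩) hpre
  | (j+1) => exact ⟨j, q, by simp [cShift]⟩

lemma desc_shape {p : List ℕ} (hpre : [0] <+: p) (hne : p ≠ [0]) :
    ∃ i q, p = cChild i ++ q := by
  obtain ⟨r, rfl⟩ := hpre
  match r with
  | [] => exact absurd (by simp : ([0] : List ℕ) ++ [] = [0]) hne
  | (i :: q) => exact ⟨i, q, rfl⟩

/-! #### Compat lemmas -/

lemma compat_symm : Symmetric Compat := by
  rintro pp qq ⟨c1, c2, c3, c4, c5⟩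
  refine ⟨c1.symm, c2.symm, c4, c3, ?_⟩
  constructor
  · intro h
    rcases lex_trichotomy qq.2 pp.2 with h' | h' | h'
    · exact h'
    · exact absurd h' (Ne.symm c2)
    · exact absurd (c5.2 h') (lex_asymm h)
  · intro h
    rcases lex_trichotomy qq.1 pp.1 with h' | h' | h'
    · exact h'
    · exact absurd h' (Ne.symm c1)
    · exact absurd (c5.1 h') (lex_asymm h)

lemma compat_map {f g : List ℕ → List ℕ} {P Q : List ℕ → Prop}
    (hf : Emb f P) (hg : Emb g Q) {pp qq : List ℕ × List ℕ}
    (h1 : P pp.1) (h2 : Q pp.2) (h3 : P qq.1) (h4 : Q qq.2) (hc : Compat pp qq) :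
    Compat (Prod.map f g pp) (Prod.map f g qq) := by
  obtain ⟨e1, e2, e3⟩ := hf h1 h3
  obtain ⟨d1, d2, d3⟩ := hg h2 h4
  obtain ⟨e1', e2', _e3'⟩ := hf h3 h1
  obtain ⟨_d1', d2', _d3'⟩ := hg h4 h2
  obtain ⟨c1, c2, c3, c4, c5⟩ := hc
  refine ⟨fun h => c1 (e1 h), fun h => c2 (d1 h), ?_, ?_, ?_⟩
  · exact (e2.trans c3).trans d2.symm
  · exact (e2'.trans c4).trans d2'.symm
  · exact (e3.trans c5).trans d3.symm

lemma compat_root_child {p q : List ℕ} (hp : p ≠ []) (hq : q ≠ []) :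
    Compat ([0], [0]) (0 :: p, 0 :: q) := by
  refine ⟨by simpa using hp, by simpa using hq, ?_, ?_, ?_⟩
  · simp [List.cons_prefix_cons]
  · simp [List.cons_prefix_cons, hp, hq]
  · simp [lex_cons_iff, llex_nil_iff, hp, hq, -List.lex_lt]

lemma compat_root_shift (i j : ℕ) (p q : List ℕ) :
    Compat ([0], [0]) ((i+1) :: p, (j+1) :: q) := by
  refine ⟨by simp, by simp, ?_, ?_, ?_⟩
  · simp [List.cons_prefix_cons]
  · simp [List.cons_prefix_cons]
  · simp [lex_cons_iff, -List.lex_lt]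

lemma compat_child_shift (p q p' q' : List ℕ) (i j : ℕ) :
    Compat (0 :: p, 0 :: q) ((i+1) :: p', (j+1) :: q') := by
  refine ⟨by simp, by simp, ?_, ?_, ?_⟩
  · simp [List.cons_prefix_cons]
  · simp [List.cons_prefix_cons]
  · simp [lex_cons_iff, -List.lex_lt]

/-! #### Transfer of mappings along address embeddings -/

lemma transfer [Inhabited α] (η : α → α → ℤ) {F F' A B : LForest α}
    {M : List (List ℕ × List ℕ)} {f g : List ℕ → List ℕ} {P Q : List ℕ → Prop}
    (hM : IsMappingF F F' M)
    (hPQ : ∀ pr ∈ M, P pr.1 ∧ Q pr.2)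
    (hf : Emb f P) (hg : Emb g Q)
    (hlf : ∀ p, P p → IsNode F p → labelAt A (f p) = labelAt F p)
    (hlg : ∀ q, Q q → IsNode F' q → labelAt B (g q) = labelAt F' q) :
    IsMappingF A B (M.map (Prod.map f g)) ∧
      wtF η A B (M.map (Prod.map f g)) = wtF η F F' M := by
  obtain ⟨hmem, hpw⟩ := hM
  refine ⟨⟨?_, ?_⟩, ?_⟩
  · rintro pr hpr
    rw [List.mem_map] at hpr
    obtain ⟨pr0, h0, rfl⟩ := hpr
    obtain ⟨hn1, hn2⟩ := hmem pr0 h0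
    obtain ⟨hp1, hp2⟩ := hPQ pr0 h0
    constructor
    · show (labelAt A (f pr0.1)).isSome
      rw [hlf _ hp1 hn1]; exact hn1
    · show (labelAt B (g pr0.2)).isSome
      rw [hlg _ hp2 hn2]; exact hn2
  · rw [List.pairwise_map]
    refine hpw.imp_of_mem ?_
    intro a b ha hb hab
    exact compat_map hf hg (hPQ a ha).1 (hPQ a ha).2 (hPQ b hb).1 (hPQ b hb).2 hab
  · unfold wtF
    rw [List.map_map]
    congr 1
    refine List.map_congr_left ?_
    intro pr hpr
    obtain ⟨hn1, hn2⟩ := hmem pr hpr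
    obtain ⟨hp1, hp2⟩ := hPQ pr hpr
    simp only [Function.comp, Prod.map_fst, Prod.map_snd]
    rw [hlf _ hp1 hn1, hlg _ hp2 hn2]

/-! #### The similarity recurrence -/

def fsim {β : Type*} (η : β → β → ℤ) : LForest β → LForest β → ℤ
  | [], [] => 0
  | _ :: _, [] => 0
  | [], _ :: _ => 0
  | .node a ts :: rest, .node b us :: rest' =>
      max (η a b + fsim η ts us + fsim η rest rest')
        (max (fsim η (ts ++ rest) (.node b us :: rest'))
             (fsim η (.node a ts :: rest) (us ++ rest')))
termination_by F G => sizeF F + sizeF G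
decreasing_by all_goals (simp [sizeF, sizeT, sizeF_append] <;> omega)

lemma fsim_nil_right {β : Type*} (η : β → β → ℤ) (F : LForest β) : fsim η F [] = 0 := by
  cases F with
  | nil => rw [fsim]
  | cons t rest => rw [fsim]

lemma fsim_nil_left {β : Type*} (η : β → β → ℤ) (F : LForest β) : fsim η [] F = 0 := by
  cases F with
  | nil => rw [fsim]
  | cons t rest => rw [fsim]

lemma sizeT_pos (t : LTree α) : 0 < sizeT t := by
  cases t; simp [sizeT]

lemma sumCostF_append (c : α → ℤ) (xs ys : LForest α) :
    sumCostF c (xs ++ ys) = sumCostF c xs + sumCostF c ys := by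
  induction xs with
  | nil => simp [sumCostF]
  | cons t ts ih => simp [sumCostF, ih]; ring

lemma fed_nil_right (δ : α → α → ℤ) (δdel δins : α → ℤ) (F : LForest α) :
    fed δ δdel δins F [] = sumCostF δdel F := by
  suffices H : ∀ N (F : LForest α), sizeF F = N → fed δ δdel δins F [] = sumCostF δdel F from
    H _ F rfl
  intro N
  induction N using Nat.strong_induction_on with
  | _ N ih =>
  intro F hN
  subst hN
  cases F with
  | nil => rw [fed]; rw [sumCostF]
  | cons t rest =>
    obtain ⟨a, ts⟩ := t
    rw [fed, ih (sizeF (ts ++ rest)) (by simp [sizeF, sizeT, sizeF_append] <;> omega) _ rfl]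
    simp [sumCostF, sumCostT, sumCostF_append]
    ring

lemma fed_nil_left (δ : α → α → ℤ) (δdel δins : α → ℤ) (F : LForest α) :
    fed δ δdel δins [] F = sumCostF δins F := by
  suffices H : ∀ N (F : LForest α), sizeF F = N → fed δ δdel δins [] F = sumCostF δins F from
    H _ F rfl
  intro N
  induction N using Nat.strong_induction_on with
  | _ N ih =>
  intro F hN
  subst hN
  cases F with
  | nil => rw [fed]; rw [sumCostF]
  | cons t rest =>
    obtain ⟨a, ts⟩ := t
    rw [fed, ih (sizeF (ts ++ rest)) (by simp [sizeF, sizeT, sizeF_append] <;> omega) _ rfl]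
    simp [sumCostF, sumCostT, sumCostF_append]
    ring

lemma fsim_eq_fed (δ : α → α → ℤ) (δdel δins : α → ℤ) (F F' : LForest α) :
    fsim (fun a b => δdel a + δins b - δ a b) F F' =
      sumCostF δdel F + sumCostF δins F' - fed δ δdel δins F F' := by
  suffices H : ∀ N (F F' : LForest α), sizeF F + sizeF F' = N →
      fsim (fun a b => δdel a + δins b - δ a b) F F' =
        sumCostF δdel F + sumCostF δins F' - fed δ δdel δins F F' from H _ F F' rfl
  intro N
  induction N using Nat.strong_induction_on with
  | _ N ih =>
  intro F F' hN
  subst hN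
  cases F with
  | nil =>
    rw [fsim_nil_left, fed_nil_left]
    simp [sumCostF]
  | cons t rest =>
    cases F' with
    | nil =>
      rw [fsim_nil_right, fed_nil_right]
      simp [sumCostF]
    | cons t' rest' =>
      obtain ⟨a, ts⟩ := t
      obtain ⟨b, us⟩ := t'
      have hts := sizeT_pos (LTree.node a ts)
      have hts' := sizeT_pos (LTree.node b us)
      have e1 := ih (sizeF ts + sizeF us)
        (by simp [sizeF, sizeT] <;> omega) ts us rfl
      have e2 := ih (sizeF rest + sizeF rest')
        (by simp [sizeF, sizeT] <;> omega) rest rest' rfl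
      have e3 := ih (sizeF (ts ++ rest) + sizeF (LTree.node b us :: rest'))
        (by simp [sizeF, sizeT, sizeF_append] <;> omega) (ts ++ rest) (LTree.node b us :: rest') rfl
      have e4 := ih (sizeF (LTree.node a ts :: rest) + sizeF (us ++ rest'))
        (by simp [sizeF, sizeT, sizeF_append] <;> omega) (LTree.node a ts :: rest) (us ++ rest') rfl
      rw [fsim, fed, e1, e2, e3, e4]
      simp only [sumCostF, sumCostT, sumCostF_append]
      omega

end Aux

section Main

variable {α : Type*} [Inhabited α]

lemma wtF_perm (η : α → α → ℤ) (F F' : LForest α) {M M' : List (List ℕ × List ℕ)}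
    (h : M.Perm M') : wtF η F F' M = wtF η F F' M' :=
  (h.map _).sum_eq

/-- Existence of an optimal mapping. -/
lemma exists_opt (η : α → α → ℤ) (F F' : LForest α) :
    ∃ M, IsMappingF F F' M ∧ wtF η F F' M = fsim η F F' := by
  suffices H : ∀ N (F F' : LForest α), sizeF F + sizeF F' = N →
      ∃ M, IsMappingF F F' M ∧ wtF η F F' M = fsim η F F' from H _ F F' rfl
  intro N
  induction N using Nat.strong_induction_on with
  | _ N ih =>
  intro F F' hN
  subst hN
  cases F with
  | nil =>
    refine ⟨[], ⟨by simp, List.Pairwise.nil⟩, ?_⟩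
    rw [fsim_nil_left]; simp [wtF]
  | cons t rest =>
    cases F' with
    | nil =>
      refine ⟨[], ⟨by simp, List.Pairwise.nil⟩, ?_⟩
      rw [fsim_nil_right]; simp [wtF]
    | cons t' rest' =>
      obtain ⟨a, ts⟩ := t
      obtain ⟨b, us⟩ := t'
      set F : LForest α := LTree.node a ts :: rest with hF
      set F' : LForest α := LTree.node b us :: rest' with hF'
      have hts := sizeT_pos (LTree.node a ts)
      have hts' := sizeT_pos (LTree.node b us)
      have hfs : fsim η F F' = max (η a b + fsim η ts us + fsim η rest rest')
          (max (fsim η (ts ++ rest) F') (fsim η F (us ++ rest'))) := by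
        rw [hF, hF', fsim]
      obtain ⟨M1, hM1, hw1⟩ := ih (sizeF ts + sizeF us)
        (by simp [hF, hF', sizeF, sizeT] <;> omega) ts us rfl
      obtain ⟨M2, hM2, hw2⟩ := ih (sizeF rest + sizeF rest')
        (by simp [hF, hF', sizeF, sizeT] <;> omega) rest rest' rfl
      obtain ⟨M3, hM3, hw3⟩ := ih (sizeF (ts ++ rest) + sizeF F')
        (by simp [hF, sizeF, sizeT, sizeF_append] <;> omega) (ts ++ rest) F' rfl
      obtain ⟨M4, hM4, hw4⟩ := ih (sizeF F + sizeF (us ++ rest'))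
        (by simp [hF', sizeF, sizeT, sizeF_append] <;> omega) F (us ++ rest') rfl
      rcases max_choice (η a b + fsim η ts us + fsim η rest rest')
          (max (fsim η (ts ++ rest) F') (fsim η F (us ++ rest'))) with hmx | hmx
      · -- match the two roots
        have T1 := transfer η (A := F) (B := F') hM1
          (P := fun p => ∃ i q, p = cSing i ++ q) (Q := fun p => ∃ i q, p = cSing i ++ q)
          (f := fun p => 0 :: p) (g := fun p => 0 :: p)
          (fun pr hpr => ⟨(hM1.1 pr hpr).1.shape, (hM1.1 pr hpr).2.shape⟩)
          emb_cons0 emb_cons0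
          (by rintro p ⟨i, q, rfl⟩ _
              show labelAt F (0 :: i :: q) = labelAt ts (i :: q)
              rw [hF, labelAt_zero, if_neg (by simp)])
          (by rintro p ⟨i, q, rfl⟩ _
              show labelAt F' (0 :: i :: q) = labelAt us (i :: q)
              rw [hF', labelAt_zero, if_neg (by simp)])
        have T2 := transfer η (A := F) (B := F') hM2
          (P := fun p => ∃ i q, p = cSing i ++ q) (Q := fun p => ∃ i q, p = cSing i ++ q)
          (f := shiftHead 1) (g := shiftHead 1)
          (fun pr hpr => ⟨(hM2.1 pr hpr).1.shape, (hM2.1 pr hpr).2.shape⟩)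
          emb_shift1 emb_shift1
          (by rintro p ⟨i, q, rfl⟩ _
              show labelAt F ((i+1) :: q) = labelAt rest (i :: q)
              rw [hF, labelAt_succ])
          (by rintro p ⟨i, q, rfl⟩ _
              show labelAt F' ((i+1) :: q) = labelAt rest' (i :: q)
              rw [hF', labelAt_succ])
        set M1' := M1.map (Prod.map (fun p => 0 :: p) (fun p => 0 :: p)) with hM1'd
        set M2' := M2.map (Prod.map (shiftHead 1) (shiftHead 1)) with hM2'd
        have shape1 : ∀ pr ∈ M1', ∃ p q, pr = (0 :: p, 0 :: q) ∧ p ≠ [] ∧ q ≠ [] := by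
          intro pr hpr
          rw [hM1'd, List.mem_map] at hpr
          obtain ⟨pr0, h0, rfl⟩ := hpr
          exact ⟨pr0.1, pr0.2, rfl, (hM1.1 pr0 h0).1.ne_nil, (hM1.1 pr0 h0).2.ne_nil⟩
        have shape2 : ∀ pr ∈ M2', ∃ i j p q, pr = ((i+1) :: p, (j+1) :: q) := by
          intro pr hpr
          rw [hM2'd, List.mem_map] at hpr
          obtain ⟨pr0, h0, rfl⟩ := hpr
          obtain ⟨i, p, hp⟩ := List.exists_cons_of_ne_nil (hM2.1 pr0 h0).1.ne_nil
          obtain ⟨j, q, hq⟩ := List.exists_cons_of_ne_nil (hM2.1 pr0 h0).2.ne_nil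
          exact ⟨i, j, p, q, by simp [Prod.map, hp, hq, shiftHead]⟩
        refine ⟨(([0], [0])) :: (M1' ++ M2'), ⟨?_, ?_⟩, ?_⟩
        · rintro pr hpr
          rcases List.mem_cons.1 hpr with rfl | hpr
          · constructor
            · show (labelAt F [0]).isSome
              rw [hF, labelAt_zero, if_pos rfl]; simp
            · show (labelAt F' [0]).isSome
              rw [hF', labelAt_zero, if_pos rfl]; simp
          · rcases List.mem_append.1 hpr with h | h
            · exact T1.1.1 pr h
            · exact T2.1.1 pr h
        · rw [List.pairwise_cons]
          constructor
          · intro pr hpr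
            rcases List.mem_append.1 hpr with h | h
            · obtain ⟨p, q, rfl, hp, hq⟩ := shape1 pr h
              exact compat_root_child hp hq
            · obtain ⟨i, j, p, q, rfl⟩ := shape2 pr h
              exact compat_root_shift i j p q
          · rw [List.pairwise_append]
            refine ⟨T1.1.2, T2.1.2, ?_⟩
            intro x hx y hy
            obtain ⟨p, q, rfl, hp, hq⟩ := shape1 x hx
            obtain ⟨i, j, p', q', rfl⟩ := shape2 y hy
            exact compat_child_shift p q p' q' i j
        · have hroot : η ((labelAt F [0]).getD default) ((labelAt F' [0]).getD default)
              = η a b := by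
            rw [hF, hF', labelAt_zero, labelAt_zero, if_pos rfl, if_pos rfl]
            rfl
          rw [hfs, hmx]
          unfold wtF at T1 T2 ⊢
          simp only [List.map_cons, List.map_append, List.sum_cons, List.sum_append]
          rw [hroot, T1.2, T2.2]
          unfold wtF at hw1 hw2
          rw [hw1, hw2]
          ring
      · -- delete or insert the leftmost root
        rcases max_choice (fsim η (ts ++ rest) F') (fsim η F (us ++ rest')) with hmx2 | hmx2
        · -- delete
          have T3 := transfer η (A := F) (B := F') hM3
            (P := fun p => ∃ i q, p = cSing i ++ q) (Q := fun _ => True)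
            (f := psiF ts.length) (g := id)
            (fun pr hpr => ⟨(hM3.1 pr hpr).1.shape, trivial⟩)
            (emb_psi ts.length) (emb_id _)
            (by rintro p ⟨i, q, rfl⟩ hn
                show labelAt F (psiF ts.length (i :: q)) = labelAt (ts ++ rest) (i :: q)
                by_cases h : i < ts.length
                · rw [psiF, if_pos h, hF, labelAt_zero, if_neg (by simp),
                    labelAt_append_lt ts rest h]
                · rw [psiF, if_neg h, hF]
                  have : i - ts.length + 1 = (i - ts.length) + 1 := rfl
                  rw [this, labelAt_succ, labelAt_append_ge ts rest (by omega)])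
            (fun q _ _ => rfl)
          refine ⟨M3.map (Prod.map (psiF ts.length) id), T3.1, ?_⟩
          rw [T3.2, hw3, hfs, hmx, hmx2]
        · -- insert
          have T4 := transfer η (A := F) (B := F') hM4
            (P := fun _ => True) (Q := fun p => ∃ i q, p = cSing i ++ q)
            (f := id) (g := psiF us.length)
            (fun pr hpr => ⟨trivial, (hM4.1 pr hpr).2.shape⟩)
            (emb_id _) (emb_psi us.length)
            (fun q _ _ => rfl)
            (by rintro p ⟨i, q, rfl⟩ hn
                show labelAt F' (psiF us.length (i :: q)) = labelAt (us ++ rest') (i :: q)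
                by_cases h : i < us.length
                · rw [psiF, if_pos h, hF', labelAt_zero, if_neg (by simp),
                    labelAt_append_lt us rest' h]
                · rw [psiF, if_neg h, hF']
                  have : i - us.length + 1 = (i - us.length) + 1 := rfl
                  rw [this, labelAt_succ, labelAt_append_ge us rest' (by omega)])
          refine ⟨M4.map (Prod.map id (psiF us.length)), T4.1, ?_⟩
          rw [T4.2, hw4, hfs, hmx, hmx2]

/-- Optimality: every mapping weight is at most `fsim`. -/
lemma wt_le_fsim (η : α → α → ℤ) (F F' : LForest α)
    (M : List (List ℕ × List ℕ)) (hM : IsMappingF F F' M) :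
    wtF η F F' M ≤ fsim η F F' := by
  suffices H : ∀ N (F F' : LForest α), sizeF F + sizeF F' = N →
      ∀ M, IsMappingF F F' M → wtF η F F' M ≤ fsim η F F' from H _ F F' rfl M hM
  clear hM M
  intro N
  induction N using Nat.strong_induction_on with
  | _ N ih =>
  intro F F' hN M hM
  subst hN
  cases F with
  | nil =>
    cases M with
    | nil => rw [fsim_nil_left]; simp [wtF]
    | cons pr M =>
      have := (hM.1 pr List.mem_cons_self).1
      unfold IsNode at this
      simp at this
  | cons t rest =>
    cases F' with
    | nil =>
      cases M with
      | nil => rw [fsim_nil_right]; simp [wtF]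
      | cons pr M =>
        have := (hM.1 pr List.mem_cons_self).2
        unfold IsNode at this
        simp at this
    | cons t' rest' =>
      obtain ⟨a, ts⟩ := t
      obtain ⟨b, us⟩ := t'
      set F : LForest α := LTree.node a ts :: rest with hF
      set F' : LForest α := LTree.node b us :: rest' with hF'
      have hts := sizeT_pos (LTree.node a ts)
      have hts' := sizeT_pos (LTree.node b us)
      have hfs : fsim η F F' = max (η a b + fsim η ts us + fsim η rest rest')
          (max (fsim η (ts ++ rest) F') (fsim η F (us ++ rest'))) := by
        rw [hF, hF', fsim]
      by_cases h1 : ∀ pr ∈ M, pr.1 ≠ ([0] : List ℕ)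
      · -- the root of F is unmatched: delete it
        have T := transfer η (A := ts ++ rest) (B := F') hM
          (P := fun p => ∃ i q, p = cMix ts.length i ++ q) (Q := fun _ => True)
          (f := phiF ts.length) (g := id)
          (fun pr hpr => ⟨classify (hM.1 pr hpr).1 (h1 pr hpr), trivial⟩)
          (emb_phi ts.length) (emb_id _)
          (by rintro p ⟨i, q, rfl⟩ hn
              by_cases h : i < ts.length
              · have hc : cMix ts.length i ++ q = 0 :: i :: q := by simp [cMix, h]
                rw [hc]
                show labelAt (ts ++ rest) (i :: q) = _
                rw [labelAt_append_lt ts rest h, hF, labelAt_zero, if_neg (by simp)]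
              · have hc : cMix ts.length i ++ q = (i - ts.length + 1) :: q := by
                  simp [cMix, h]
                rw [hc]
                show labelAt (ts ++ rest) ((i - ts.length + ts.length) :: q) = _
                rw [labelAt_append_ge ts rest (by omega), hF]
                have h2 : i - ts.length + ts.length - ts.length = i - ts.length := by omega
                rw [h2]
                have h3 : i - ts.length + 1 = (i - ts.length) + 1 := rfl
                rw [h3, labelAt_succ])
          (fun q _ _ => rfl)
        calc wtF η F F' M = _ := T.2.symm
          _ ≤ fsim η (ts ++ rest) F' := ih (sizeF (ts ++ rest) + sizeF F')
              (by simp [hF, sizeF, sizeT, sizeF_append] <;> omega) (ts ++ rest) F' rfl _ T.1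
          _ ≤ fsim η F F' := by rw [hfs]; exact le_max_of_le_right (le_max_left _ _)
      by_cases h2 : ∀ pr ∈ M, pr.2 ≠ ([0] : List ℕ)
      · -- the root of F' is unmatched: insert it
        have T := transfer η (A := F) (B := us ++ rest') hM
          (P := fun _ => True) (Q := fun p => ∃ i q, p = cMix us.length i ++ q)
          (f := id) (g := phiF us.length)
          (fun pr hpr => ⟨trivial, classify (hM.1 pr hpr).2 (h2 pr hpr)⟩)
          (emb_id _) (emb_phi us.length)
          (fun q _ _ => rfl)
          (by rintro p ⟨i, q, rfl⟩ hn
              by_cases h : i < us.length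
              · have hc : cMix us.length i ++ q = 0 :: i :: q := by simp [cMix, h]
                rw [hc]
                show labelAt (us ++ rest') (i :: q) = _
                rw [labelAt_append_lt us rest' h, hF', labelAt_zero, if_neg (by simp)]
              · have hc : cMix us.length i ++ q = (i - us.length + 1) :: q := by
                  simp [cMix, h]
                rw [hc]
                show labelAt (us ++ rest') ((i - us.length + us.length) :: q) = _
                rw [labelAt_append_ge us rest' (by omega), hF']
                have h2' : i - us.length + us.length - us.length = i - us.length := by omega
                rw [h2']
                have h3 : i - us.length + 1 = (i - us.length) + 1 := rfl
                rw [h3, labelAt_succ])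
        calc wtF η F F' M = _ := T.2.symm
          _ ≤ fsim η F (us ++ rest') := ih (sizeF F + sizeF (us ++ rest'))
              (by simp [hF', sizeF, sizeT, sizeF_append] <;> omega) F (us ++ rest') rfl _ T.1
          _ ≤ fsim η F F' := by rw [hfs]; exact le_max_of_le_right (le_max_right _ _)
      · -- both roots are matched; then they are matched to each other
        push_neg at h1 h2
        obtain ⟨⟨p1, y⟩, hpr1, he1⟩ := h1
        obtain ⟨⟨x, p2⟩, hpr2, he2⟩ := h2
        simp only at he1 he2
        subst he1; subst he2
        have hroot : (([0], [0]) : List ℕ × List ℕ) ∈ M := by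
          by_cases hy : y = ([0] : List ℕ)
          · subst hy; exact hpr1
          by_cases hx : x = ([0] : List ℕ)
          · subst hx; exact hpr2
          exfalso
          have hne : (([0], y) : List ℕ × List ℕ) ≠ (x, [0]) := by
            intro h
            exact hx (congrArg Prod.fst h).symm
          have hcc : Compat ([0], y) (x, [0]) :=
            by haveI : Std.Symm Compat := ⟨fun _ _ h => compat_symm h⟩; exact hM.2.forall hpr1 hpr2 hne
          have hynn : y ≠ [] := (hM.1 _ hpr1).2.ne_nil
          have hxnn : x ≠ [] := (hM.1 _ hpr2).1.ne_nil
          obtain ⟨c1, c2, c3, c4, c5⟩ := hcc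
          simp only at c1 c2 c3 c4 c5
          have hy0 : ¬ (y <+: [0]) := by
            intro h
            obtain ⟨k, y', rfl⟩ := List.exists_cons_of_ne_nil hynn
            rw [List.cons_prefix_cons] at h
            obtain ⟨rfl, h⟩ := h
            exact hy (by rw [List.prefix_nil.1 h])
          have hx0 : ¬ ([0] <+: x) := fun h => hy0 (c3.1 h)
          have hlex : LLex [0] x := by
            obtain ⟨k, x', rfl⟩ := List.exists_cons_of_ne_nil hxnn
            match k with
            | 0 => exact absurd (List.cons_prefix_cons.2 ⟨rfl, List.nil_prefix⟩) hx0
            | (j+1) => exact List.Lex.rel (by omega)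
          have : LLex y [0] := c5.1 hlex
          obtain ⟨k, y', rfl⟩ := List.exists_cons_of_ne_nil hynn
          rw [lex_cons_iff] at this
          rcases this with h | ⟨rfl, h⟩
          · omega
          · exact List.not_lt_nil _ h
        classical
        obtain ⟨M₀, hperm⟩ : ∃ M₀, M.Perm ((([0], [0]) : List ℕ × List ℕ) :: M₀) :=
          ⟨_, List.perm_cons_erase hroot⟩
        have hpwall : (((([0], [0]) : List ℕ × List ℕ)) :: M₀).Pairwise Compat :=
          (hperm.pairwise_iff (fun {x y} h => compat_symm h)).1 hM.2
        have hroots : ∀ pr ∈ M₀, Compat ([0], [0]) pr := (List.pairwise_cons.1 hpwall).1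
        have hpw0 : M₀.Pairwise Compat := (List.pairwise_cons.1 hpwall).2
        have hmem0 : ∀ pr ∈ M₀, pr ∈ M := fun pr h =>
          hperm.symm.subset (List.mem_cons_of_mem _ h)
        have hfacts : ∀ pr ∈ M₀, pr.1 ≠ ([0] : List ℕ) ∧ pr.2 ≠ ([0] : List ℕ) ∧
            ([0] <+: pr.1 ↔ [0] <+: pr.2) := by
          intro pr h
          obtain ⟨c1, c2, c3, _, _⟩ := hroots pr h
          exact ⟨Ne.symm c1, Ne.symm c2, c3⟩
        set pdesc : (List ℕ × List ℕ) → Bool := fun pr => decide ([0] <+: pr.1)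
          with hpdescdef
        set Mc := M₀.filter pdesc with hMcdef
        set Mr := M₀.filter (fun pr => !pdesc pr) with hMrdef
        have hpermc : (Mc ++ Mr).Perm M₀ := List.filter_append_perm _ _
        have hMcmem : ∀ pr ∈ Mc, pr ∈ M₀ ∧ [0] <+: pr.1 := by
          intro pr h
          rw [hMcdef, List.mem_filter] at h
          exact ⟨h.1, by simpa [hpdescdef] using h.2⟩
        have hMrmem : ∀ pr ∈ Mr, pr ∈ M₀ ∧ ¬ ([0] <+: pr.1) := by
          intro pr h
          rw [hMrdef, List.mem_filter] at h
          exact ⟨h.1, by simpa [hpdescdef] using h.2⟩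
        have hMcMap : IsMappingF F F' Mc :=
          ⟨fun pr h => hM.1 pr (hmem0 pr (hMcmem pr h).1),
           hpw0.sublist List.filter_sublist⟩
        have hMrMap : IsMappingF F F' Mr :=
          ⟨fun pr h => hM.1 pr (hmem0 pr (hMrmem pr h).1),
           hpw0.sublist List.filter_sublist⟩
        -- weight decomposition
        have hrootwt : η ((labelAt F [0]).getD default) ((labelAt F' [0]).getD default)
            = η a b := by
          rw [hF, hF', labelAt_zero, labelAt_zero, if_pos rfl, if_pos rfl]
          rfl
        have hperm2 : M.Perm ((([0], [0]) : List ℕ × List ℕ) :: (Mc ++ Mr)) :=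
          hperm.trans (List.Perm.cons _ hpermc.symm)
        have hla : (labelAt F [0]).getD default = a := by
          rw [hF, labelAt_zero, if_pos rfl]; rfl
        have hlb : (labelAt F' [0]).getD default = b := by
          rw [hF', labelAt_zero, if_pos rfl]; rfl
        have hwsplit : wtF η F F' M = η a b + wtF η F F' Mc + wtF η F F' Mr := by
          rw [wtF_perm η F F' hperm2]
          unfold wtF
          simp only [List.map_cons, List.sum_cons, List.map_append, List.sum_append]
          simp [hla, hlb]
          ring
        -- transfer the descendant part to (ts, us)
        have TC := transfer η (A := ts) (B := us) hMcMap
          (P := fun p => ∃ i q, p = cChild i ++ q) (Q := fun p => ∃ i q, p = cChild i ++ q)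
          (f := List.tail) (g := List.tail)
          (by intro pr h
              obtain ⟨h0, hd⟩ := hMcmem pr h
              obtain ⟨f1, f2, f3⟩ := hfacts pr h0
              exact ⟨desc_shape hd f1, desc_shape (f3.1 hd) f2⟩)
          emb_tail emb_tail
          (by rintro p ⟨i, q, rfl⟩ hn
              show labelAt ts (i :: q) = labelAt F (0 :: i :: q)
              rw [hF, labelAt_zero, if_neg (by simp)])
          (by rintro p ⟨i, q, rfl⟩ hn
              show labelAt us (i :: q) = labelAt F' (0 :: i :: q)
              rw [hF', labelAt_zero, if_neg (by simp)])
        have hlec : wtF η F F' Mc ≤ fsim η ts us := by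
          rw [← TC.2]
          exact ih (sizeF ts + sizeF us)
            (by simp [hF, hF', sizeF, sizeT] <;> omega) ts us rfl _ TC.1
        -- transfer the non-descendant part to (rest, rest')
        have TR := transfer η (A := rest) (B := rest') hMrMap
          (P := fun p => ∃ i q, p = cShift 1 i ++ q) (Q := fun p => ∃ i q, p = cShift 1 i ++ q)
          (f := unshift) (g := unshift)
          (by intro pr h
              obtain ⟨h0, hd⟩ := hMrmem pr h
              obtain ⟨f1, f2, f3⟩ := hfacts pr h0
              have hn1 := (hM.1 pr (hmem0 pr h0)).1.ne_nil
              have hn2 := (hM.1 pr (hmem0 pr h0)).2.ne_nil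
              exact ⟨nondesc_shape hn1 hd, nondesc_shape hn2 (fun h' => hd (f3.2 h'))⟩)
          emb_unshift emb_unshift
          (by rintro p ⟨i, q, rfl⟩ hn
              show labelAt rest ((i + 1 - 1) :: q) = labelAt F ((i + 1) :: q)
              rw [hF, labelAt_succ]
              norm_num)
          (by rintro p ⟨i, q, rfl⟩ hn
              show labelAt rest' ((i + 1 - 1) :: q) = labelAt F' ((i + 1) :: q)
              rw [hF', labelAt_succ]
              norm_num)
        have hler : wtF η F F' Mr ≤ fsim η rest rest' := by
          rw [← TR.2]
          exact ih (sizeF rest + sizeF rest')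
            (by simp [hF, hF', sizeF, sizeT] <;> omega) rest rest' rfl _ TR.1
        calc wtF η F F' M = η a b + wtF η F F' Mc + wtF η F F' Mr := hwsplit
          _ ≤ η a b + fsim η ts us + fsim η rest rest' := by
              have := add_le_add (add_le_add (le_refl (η a b)) hlec) hler
              linarith
          _ ≤ fsim η F F' := by rw [hfs]; exact le_max_left _ _

end Main

/-- forest similarity and tree edit distance are complementary:
`sim(F, F') = Σ_{v ∈ F} δ(v,ε) + Σ_{v' ∈ F'} δ(ε,v') - ed(F, F')`, where
`η(v,v') = δ(v,ε) + δ(ε,v') - δ(v,v')`. -/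
theorem stmt11 {α : Type*} [Inhabited α] (δ : α → α → ℤ) (δdel δins : α → ℤ)
    (hsub : ∀ a b, δ a b ≤ δdel a + δins b)
    (hdiag : ∀ a, δ a a = 0)
    (hδnn : ∀ a b, 0 ≤ δ a b) (hdelnn : ∀ a, 0 ≤ δdel a) (hinsnn : ∀ b, 0 ≤ δins b)
    (F F' : LForest α) (S : ℤ)
    (hS : IsGreatest (simSetF (fun a b => δdel a + δins b - δ a b) F F') S) :
    S = sumCostF δdel F + sumCostF δins F' - fed δ δdel δins F F' := by
  set η : α → α → ℤ := fun a b => δdel a + δins b - δ a b with hηdef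
  obtain ⟨M, hMmap, hMwt⟩ := exists_opt η F F'
  have h1 : fsim η F F' ≤ S := hS.2 ⟨M, hMmap, hMwt.symm⟩
  have h2 : S ≤ fsim η F F' := by
    obtain ⟨M', hM'map, hS'⟩ := hS.1
    rw [hS']
    exact wt_le_fsim η F F' M' hM'map
  rw [le_antisymm h2 h1, hηdef, fsim_eq_fed]

end Stmt11
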